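/- For every x ∈ (0,1]: (a) Σ_{j=1}^∞ 2^{−j}·χ_{(0,1/2]}((x + 2^{−j})·(1 − ε_j(x))) equals (1/2)(1 − 2x) if x ∈ (0,1/2] and equals 0 if x ∈ (1/2,1]; (b) Σ_{j=1}^∞ 2^{−j}·χ_{(1/2,1]}((x + 2^{−j})·(1 − ε_j(x))) equals 1/2 if x ∈ (0,1/2] and equals 1 − x if x ∈ (1/2,1]. That is, C_−[χ_{(0,1/2]}] = (1/2)(1−2x)·χ_{(0,1/2]} and C_−[χ_{(1/2,1]}] = (1/2)·χ_{(0,1/2]} + (1−x)·χ_{(1/2,1]} on (0,1]. -/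

import Mathlib

open MeasureTheory Set Filter

noncomputable section

/-- The `k`-th binary digit of `x ∈ (0,1]`: `ε_k(x) = (⌈2^k x⌉ − 1) mod 2`. -/
def eps (k : ℕ) (x : ℝ) : ℤ := (⌈(2 : ℝ) ^ k * x⌉ - 1) % 2

/-- `χ_{(0,1/2]}`, the indicator function of `(0,1/2]`. -/
def chiL : ℝ → ℝ := Set.indicator (Set.Ioc 0 (1 / 2)) 1

/-- `χ_{(1/2,1]}`, the indicator function of `(1/2,1]`. -/
def chiR : ℝ → ℝ := Set.indicator (Set.Ioc (1 / 2) 1) 1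

section Aux
variable {x : ℝ}

lemma eps_cases (k : ℕ) (x : ℝ) : eps k x = 0 ∨ eps k x = 1 := by
  unfold eps; omega

lemma ceil_ge_one (hx : x ∈ Set.Ioc (0:ℝ) 1) (k : ℕ) : 1 ≤ ⌈(2:ℝ)^k * x⌉ := by
  have : (0:ℝ) < 2^k * x := mul_pos (by positivity) hx.1
  exact Int.ceil_pos.mpr this

lemma ceil_le_pow (hx : x ∈ Set.Ioc (0:ℝ) 1) (k : ℕ) : ⌈(2:ℝ)^k * x⌉ ≤ 2^k := by
  rw [Int.ceil_le]
  push_cast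
  nlinarith [hx.2, (by positivity : (0:ℝ) < (2:ℝ)^k)]

lemma ceil_step (k : ℕ) (x : ℝ) :
    ⌈(2:ℝ)^(k+1) * x⌉ - 1 = 2 * (⌈(2:ℝ)^k * x⌉ - 1) + eps (k+1) x := by
  set n := ⌈(2:ℝ)^k * x⌉ with hn
  set m := ⌈(2:ℝ)^(k+1) * x⌉ with hm
  have h2 : (2:ℝ)^(k+1) * x = 2 * ((2:ℝ)^k * x) := by ring
  have hle : m ≤ 2 * n := by
    rw [hm, Int.ceil_le, h2]; push_cast
    nlinarith [Int.le_ceil ((2:ℝ)^k * x)]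
  have hge : 2 * n - 2 < m := by
    have h1 : ((2:ℝ)^k * x) > n - 1 := by
      have := Int.ceil_lt_add_one ((2:ℝ)^k * x); linarith
    have h3 : (2:ℝ)^(k+1) * x ≤ m := Int.le_ceil _
    have : ((2*n - 2 : ℤ) : ℝ) < (m : ℝ) := by push_cast; nlinarith
    exact_mod_cast this
  have : eps (k+1) x = (m - 1) % 2 := rfl
  omega

lemma partial_sum (hx : x ∈ Set.Ioc (0:ℝ) 1) (n : ℕ) :
    ∑ j ∈ Finset.range n, ((eps (j+1) x : ℝ) * ((2:ℝ)^(j+1))⁻¹)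
      = ((⌈(2:ℝ)^n * x⌉ : ℝ) - 1) / 2^n := by
  induction n with
  | zero =>
    simp only [Finset.range_zero, Finset.sum_empty, pow_zero, one_mul]
    have : ⌈x⌉ = 1 := by
      have h1 := hx.1; have h2 := hx.2
      apply Int.ceil_eq_iff.mpr; constructor <;> push_cast <;> linarith
    rw [this]; norm_num
  | succ n ih =>
    rw [Finset.sum_range_succ, ih]
    have hstep := ceil_step n x
    have : ((⌈(2:ℝ)^(n+1) * x⌉ : ℝ)) = 2 * (⌈(2:ℝ)^n * x⌉ : ℝ) - 1 + (eps (n+1) x : ℝ) := by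
      have h' : ((⌈(2:ℝ)^(n+1) * x⌉ - 1 : ℤ) : ℝ) = ((2 * (⌈(2:ℝ)^n * x⌉ - 1) + eps (n+1) x : ℤ) : ℝ) := by
        rw [hstep]
      push_cast at h'; linarith
    rw [this]
    have h2 : (0:ℝ) < 2^n := by positivity
    field_simp
    ring

lemma hasSum_eps (hx : x ∈ Set.Ioc (0:ℝ) 1) :
    HasSum (fun j : ℕ => (eps (j+1) x : ℝ) * ((2:ℝ)^(j+1))⁻¹) x := by
  have hnn : ∀ j : ℕ, 0 ≤ (eps (j+1) x : ℝ) * ((2:ℝ)^(j+1))⁻¹ := by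
    intro j
    rcases eps_cases (j+1) x with h | h <;> rw [h] <;> positivity
  rw [hasSum_iff_tendsto_nat_of_nonneg hnn]
  have key : ∀ n : ℕ, ∑ j ∈ Finset.range n, ((eps (j+1) x : ℝ) * ((2:ℝ)^(j+1))⁻¹)
      = ((⌈(2:ℝ)^n * x⌉ : ℝ) - 1) / 2^n := partial_sum hx
  have hlow : Tendsto (fun n : ℕ => x - ((2:ℝ)^n)⁻¹) atTop (nhds x) := by
    have : Tendsto (fun n : ℕ => ((2:ℝ)^n)⁻¹) atTop (nhds 0) := by
      simpa [inv_pow] using tendsto_pow_atTop_nhds_zero_of_lt_one (by norm_num : (0:ℝ) ≤ (2:ℝ)⁻¹) (by norm_num : (2:ℝ)⁻¹ < 1)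
    simpa using (tendsto_const_nhds (x := x)).sub this
  apply tendsto_of_tendsto_of_tendsto_of_le_of_le hlow tendsto_const_nhds
  · intro n
    dsimp only
    rw [key n]
    have h1 : (2:ℝ)^n * x ≤ (⌈(2:ℝ)^n * x⌉ : ℝ) := Int.le_ceil _
    have h2 : (0:ℝ) < 2^n := by positivity
    rw [le_div_iff₀ h2]
    have h3 : ((2:ℝ)^n)⁻¹ * 2^n = 1 := inv_mul_cancel₀ (ne_of_gt h2)
    nlinarith
  · intro n
    dsimp only
    rw [key n]
    have h1 : (⌈(2:ℝ)^n * x⌉ : ℝ) - 1 < (2:ℝ)^n * x := by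
      have := Int.ceil_lt_add_one ((2:ℝ)^n * x); linarith
    have h2 : (0:ℝ) < 2^n := by positivity
    rw [div_le_iff₀ h2]
    nlinarith

lemma hasSum_one_sub_eps (hx : x ∈ Set.Ioc (0:ℝ) 1) :
    HasSum (fun j : ℕ => (1 - (eps (j+1) x : ℝ)) * ((2:ℝ)^(j+1))⁻¹) (1 - x) := by
  have hgeo : HasSum (fun j : ℕ => ((2:ℝ)^(j+1))⁻¹) 1 := by
    have := (hasSum_geometric_of_lt_one (by norm_num : (0:ℝ) ≤ 1/2)
      (by norm_num : (1:ℝ)/2 < 1)).mul_left (1/2)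
    norm_num at this
    convert this using 2 with j
    · rfl
    rw [pow_succ]
    field_simp
    rw [← mul_pow]; norm_num
  have := hgeo.sub (hasSum_eps hx)
  convert this using 2 with j
  · rfl
  ring

lemma two_zpow (j : ℕ) : (2:ℝ) ^ (-((j:ℤ)+1)) = ((2:ℝ)^(j+1))⁻¹ := by
  rw [show -((j:ℤ)+1) = -((j+1 : ℕ) : ℤ) by push_cast; ring, zpow_neg, zpow_natCast]

lemma arg_le_one (hx : x ∈ Set.Ioc (0:ℝ) 1) (k : ℕ) (h : eps (k+1) x = 0) :
    x + ((2:ℝ)^(k+1))⁻¹ ≤ 1 := by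
  have hn1 := ceil_ge_one hx (k+1)
  have hn2 := ceil_le_pow hx (k+1)
  have hodd : (⌈(2:ℝ)^(k+1) * x⌉ - 1) % 2 = 0 := h
  have hpow : (2:ℤ)^(k+1) = 2 * 2^k := by ring
  have hle : ⌈(2:ℝ)^(k+1) * x⌉ ≤ 2^(k+1) - 1 := by omega
  have hc : ((2:ℝ)^(k+1)) * x ≤ (2:ℝ)^(k+1) - 1 := by
    have h1 : (2:ℝ)^(k+1) * x ≤ (⌈(2:ℝ)^(k+1) * x⌉ : ℝ) := Int.le_ceil _
    have h2 : ((⌈(2:ℝ)^(k+1) * x⌉ : ℤ) : ℝ) ≤ (((2:ℤ)^(k+1) - 1 : ℤ) : ℝ) := by exact_mod_cast hle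
    push_cast at h2
    linarith
  have h2 : (0:ℝ) < 2^(k+1) := by positivity
  have h3 : ((2:ℝ)^(k+1))⁻¹ * 2^(k+1) = 1 := inv_mul_cancel₀ (ne_of_gt h2)
  nlinarith

lemma arg_le_half (hx : x ∈ Set.Ioc (0:ℝ) 1) (hh : x ≤ 1/2) (k : ℕ) (h : eps (k+2) x = 0) :
    x + ((2:ℝ)^(k+2))⁻¹ ≤ 1/2 := by
  have hn2 : ⌈(2:ℝ)^(k+2) * x⌉ ≤ 2^(k+1) := by
    rw [Int.ceil_le]
    push_cast
    have he : (2:ℝ)^(k+2) = 2 * 2^(k+1) := by ring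
    nlinarith [(by positivity : (0:ℝ) < (2:ℝ)^(k+1))]
  have hodd : (⌈(2:ℝ)^(k+2) * x⌉ - 1) % 2 = 0 := h
  have hn1 := ceil_ge_one hx (k+2)
  have hpow : (2:ℤ)^(k+1) = 2 * 2^k := by ring
  have hle : ⌈(2:ℝ)^(k+2) * x⌉ ≤ 2^(k+1) - 1 := by omega
  have hc : ((2:ℝ)^(k+2)) * x ≤ (2:ℝ)^(k+1) - 1 := by
    have h1 : (2:ℝ)^(k+2) * x ≤ (⌈(2:ℝ)^(k+2) * x⌉ : ℝ) := Int.le_ceil _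
    have h2 : ((⌈(2:ℝ)^(k+2) * x⌉ : ℤ) : ℝ) ≤ (((2:ℤ)^(k+1) - 1 : ℤ) : ℝ) := by exact_mod_cast hle
    push_cast at h2
    linarith
  have h2 : (0:ℝ) < 2^(k+2) := by positivity
  have h3 : ((2:ℝ)^(k+2))⁻¹ * 2^(k+2) = 1 := inv_mul_cancel₀ (ne_of_gt h2)
  have h4 : (2:ℝ)^(k+2) = 2 * 2^(k+1) := by ring
  nlinarith

lemma eps_one_le (hx : x ∈ Set.Ioc (0:ℝ) 1) (hh : x ≤ 1/2) : eps 1 x = 0 := by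
  have : ⌈(2:ℝ)^1 * x⌉ = 1 := by
    apply Int.ceil_eq_iff.mpr
    constructor <;> push_cast <;> [linarith [hx.1]; linarith]
  unfold eps
  rw [this]
  decide

lemma eps_one_gt (hx : x ∈ Set.Ioc (0:ℝ) 1) (hh : ¬ x ≤ 1/2) : eps 1 x = 1 := by
  push_neg at hh
  have : ⌈(2:ℝ)^1 * x⌉ = 2 := by
    apply Int.ceil_eq_iff.mpr
    constructor <;> push_cast <;> [linarith; linarith [hx.2]]
  unfold eps
  rw [this]
  decide

lemma chiL_of_mem {y : ℝ} (h1 : 0 < y) (h2 : y ≤ 1/2) : chiL y = 1 := by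
  have hm : y ∈ Set.Ioc (0:ℝ) (1/2) := ⟨h1, h2⟩
  show (Set.Ioc (0:ℝ) (1/2)).indicator 1 y = 1
  rw [Set.indicator_of_mem hm]; rfl

lemma chiL_of_not (h : ∀ _ : (0:ℝ) < y, ¬ y ≤ 1/2) : chiL y = 0 := by
  apply Set.indicator_of_notMem
  rintro ⟨a, b⟩; exact h a b

lemma chiR_of_mem {y : ℝ} (h1 : 1/2 < y) (h2 : y ≤ 1) : chiR y = 1 := by
  have hm : y ∈ Set.Ioc (1/2:ℝ) 1 := ⟨h1, h2⟩
  show (Set.Ioc (1/2:ℝ) 1).indicator 1 y = 1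
  rw [Set.indicator_of_mem hm]; rfl

lemma chiL_zero : chiL 0 = 0 := by
  apply Set.indicator_of_notMem; simp

lemma chiR_zero : chiR 0 = 0 := by
  apply Set.indicator_of_notMem; simp [chiR]

lemma chiR_of_le {y : ℝ} (h : y ≤ 1/2) : chiR y = 0 := by
  apply Set.indicator_of_notMem
  rintro ⟨a, b⟩; linarith

lemma chiL_of_gt {y : ℝ} (h : 1/2 < y) : chiL y = 0 := by
  apply Set.indicator_of_notMem
  rintro ⟨a, b⟩; linarith

end Aux

/-- `C_−[χ_{(0,1/2]}] = (1/2)(1−2x)·χ_{(0,1/2]}` and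
`C_−[χ_{(1/2,1]}] = (1/2)·χ_{(0,1/2]} + (1−x)·χ_{(1/2,1]}` on `(0,1]`. -/
theorem stmt8 (x : ℝ) (hx : x ∈ Set.Ioc (0 : ℝ) 1) :
    (∑' j : ℕ, (2 : ℝ) ^ (-((j : ℤ) + 1)) *
        chiL ((x + (2 : ℝ) ^ (-((j : ℤ) + 1))) * (1 - (eps (j + 1) x : ℝ)))) =
      (if x ≤ 1 / 2 then (1 / 2) * (1 - 2 * x) else 0) ∧
    (∑' j : ℕ, (2 : ℝ) ^ (-((j : ℤ) + 1)) *
        chiR ((x + (2 : ℝ) ^ (-((j : ℤ) + 1))) * (1 - (eps (j + 1) x : ℝ)))) =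
      (if x ≤ 1 / 2 then 1 / 2 else 1 - x) := by
  have hx0 := hx.1
  have hx1 := hx.2
  simp only [two_zpow]
  have hOne := hasSum_one_sub_eps hx
  have hppos : ∀ j : ℕ, (0:ℝ) < ((2:ℝ)^(j+1))⁻¹ := fun j => by positivity
  have hhalfinv : ((2:ℝ)^(0+1))⁻¹ = 1/2 := by norm_num
  by_cases hh : x ≤ 1/2
  · rw [if_pos hh, if_pos hh]
    have he1 : eps 1 x = 0 := eps_one_le hx hh
    constructor
    · -- chiL
      have hδ : HasSum (fun j : ℕ => if j = 0 then (1:ℝ)/2 else 0) (1/2) := hasSum_ite_eq 0 (1/2)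
      have hL := hOne.sub hδ
      have hpt : ∀ j : ℕ, ((2:ℝ)^(j+1))⁻¹ *
          chiL ((x + ((2:ℝ)^(j+1))⁻¹) * (1 - (eps (j+1) x : ℝ)))
          = (1 - (eps (j+1) x : ℝ)) * ((2:ℝ)^(j+1))⁻¹ - (if j = 0 then (1:ℝ)/2 else 0) := by
        intro j
        match j with
        | 0 =>
          rw [he1, if_pos rfl, hhalfinv]
          push_cast
          rw [sub_zero, mul_one, chiL_of_gt (by linarith)]
          ring
        | (m+1) =>
          rw [if_neg (Nat.succ_ne_zero m), sub_zero]
          rcases eps_cases (m+2) x with h | h <;> rw [h] <;> push_cast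
          · rw [sub_zero, mul_one,
              chiL_of_mem (by positivity) (arg_le_half hx hh m h)]
            ring
          · rw [sub_self, mul_zero, chiL_zero]
            ring
      rw [tsum_congr hpt, hL.tsum_eq]
      ring
    · -- chiR
      have hz : ∀ j : ℕ, j ≠ 0 → ((2:ℝ)^(j+1))⁻¹ *
          chiR ((x + ((2:ℝ)^(j+1))⁻¹) * (1 - (eps (j+1) x : ℝ))) = 0 := by
        intro j hj
        match j with
        | (m+1) =>
          rcases eps_cases (m+2) x with h | h <;> rw [h] <;> push_cast
          · rw [sub_zero, mul_one, chiR_of_le (arg_le_half hx hh m h), mul_zero]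
          · rw [sub_self, mul_zero, chiR_zero, mul_zero]
      rw [tsum_eq_single 0 hz, he1, hhalfinv]
      push_cast
      rw [sub_zero, mul_one, chiR_of_mem (by linarith) (by linarith)]
      norm_num
  · rw [if_neg hh, if_neg hh]
    push_neg at hh
    constructor
    · have hpt : ∀ j : ℕ, ((2:ℝ)^(j+1))⁻¹ *
          chiL ((x + ((2:ℝ)^(j+1))⁻¹) * (1 - (eps (j+1) x : ℝ))) = 0 := by
        intro j
        rcases eps_cases (j+1) x with h | h <;> rw [h] <;> push_cast
        · rw [sub_zero, mul_one, chiL_of_gt (by linarith [hppos j]), mul_zero]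
        · rw [sub_self, mul_zero, chiL_zero, mul_zero]
      rw [tsum_congr hpt, tsum_zero]
    · have hpt : ∀ j : ℕ, ((2:ℝ)^(j+1))⁻¹ *
          chiR ((x + ((2:ℝ)^(j+1))⁻¹) * (1 - (eps (j+1) x : ℝ)))
          = (1 - (eps (j+1) x : ℝ)) * ((2:ℝ)^(j+1))⁻¹ := by
        intro j
        rcases eps_cases (j+1) x with h | h <;> rw [h] <;> push_cast
        · rw [sub_zero, mul_one,
            chiR_of_mem (by linarith [hppos j]) (arg_le_one hx j h)]
          ring
        · rw [sub_self, mul_zero, chiR_zero]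
          ring
      rw [tsum_congr hpt, hOne.tsum_eq]
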